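/- (Contraction estimate for the Volterra operator) Let 0 < α ≤ 1, ψ increasing C¹ on I = [a,b], L > 0, M ≥ 0, ξ = Lδ for some δ > 1, and suppose f, k are continuous with ‖f(t,u,v) − f(t,ū,v̄)‖ ≤ M(‖u−ū‖ + ‖v−v̄‖) and ‖k(t,s,u) − k(t,s,ū)‖ ≤ L‖u−ū‖. Define (Tx)(t) = f(t, x(t), (1/Γ(α)) ∫_a^t ψ'(s)(ψ(t)−ψ(s))^{α−1} k(t,s,x(s)) ds). Then for all continuous u, v : I → ℝⁿ, d_{ξ,∞}(Tu, Tv) ≤ M(1 + 1/δ) d_{ξ,∞}(u,v), where d_{ξ,∞}(u,v) = sup_{t∈I} ‖u(t)−v(t)‖/E_α(ξ(ψ(t)−ψ(a))^α). -/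

import Mathlib

open MeasureTheory Set

/-- One-parameter Mittag-Leffler function `E_α(z) = ∑ z^k / Γ(αk+1)`. -/
noncomputable def ML (α z : ℝ) : ℝ := ∑' k : ℕ, z ^ k / Real.Gamma (α * k + 1)

/-- The inner Volterra integral operator. -/
noncomputable def volterraK {n : ℕ} (α : ℝ) (ψ : ℝ → ℝ) (a : ℝ)
    (k : ℝ → ℝ → EuclideanSpace ℝ (Fin n) → EuclideanSpace ℝ (Fin n))
    (x : ℝ → EuclideanSpace ℝ (Fin n)) (t : ℝ) : EuclideanSpace ℝ (Fin n) :=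
  (Real.Gamma α)⁻¹ • ∫ s in a..t, (deriv ψ s * (ψ t - ψ s) ^ (α - 1)) • k t s (x s)

/-- The weighted sup-distance `d_{ξ,∞}` between two functions on `[a,b]`. -/
noncomputable def dXi {n : ℕ} (a b ξ α : ℝ) (ψ : ℝ → ℝ)
    (x y : ℝ → EuclideanSpace ℝ (Fin n)) : ℝ :=
  ⨆ t : Icc a b, ‖x t.1 - y t.1‖ / ML α (ξ * (ψ t.1 - ψ a) ^ α)

section Aux
open Real
open scoped ENNReal NNReal

lemma meas_rpow_const (e : ℝ) : Measurable fun x : ℝ => x ^ e := by measurability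



/-- Log-convexity consequence: `Γ(y+1) ≤ (y+α)^(1-α) Γ(y+α)` for `y > 0`, `0 < α ≤ 1`. -/
lemma gamma_ratio {α y : ℝ} (hα0 : 0 < α) (hα1 : α ≤ 1) (hy : 0 < y) :
    Real.Gamma (y + 1) ≤ (y + α) ^ (1 - α) * Real.Gamma (y + α) := by
  have h1 : (0:ℝ) < y + α := by linarith
  have h2 : (0:ℝ) < y + α + 1 := by linarith
  have hc := Real.convexOn_log_Gamma.2 (mem_Ioi.2 h1) (mem_Ioi.2 h2) (le_of_lt hα0)
    (by linarith : (0:ℝ) ≤ 1 - α) (by ring)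
  have harg : α • (y + α) + (1 - α) • (y + α + 1) = y + 1 := by
    simp only [smul_eq_mul]; ring
  rw [harg] at hc
  simp only [Function.comp_apply, smul_eq_mul] at hc
  have hΓ1 : 0 < Real.Gamma (y + 1) := Real.Gamma_pos_of_pos (by linarith)
  have hΓa : 0 < Real.Gamma (y + α) := Real.Gamma_pos_of_pos h1
  have hΓa1 : Real.Gamma (y + α + 1) = (y + α) * Real.Gamma (y + α) :=
    Real.Gamma_add_one (ne_of_gt h1)
  rw [hΓa1, Real.log_mul (ne_of_gt h1) (ne_of_gt hΓa)] at hc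
  have : Real.log (Real.Gamma (y + 1)) ≤
      (1 - α) * Real.log (y + α) + Real.log (Real.Gamma (y + α)) := by nlinarith [hc]
  calc Real.Gamma (y + 1) = Real.exp (Real.log (Real.Gamma (y + 1))) := (Real.exp_log hΓ1).symm
    _ ≤ Real.exp ((1 - α) * Real.log (y + α) + Real.log (Real.Gamma (y + α))) :=
        Real.exp_le_exp.2 this
    _ = (y + α) ^ (1 - α) * Real.Gamma (y + α) := by
        rw [Real.exp_add, Real.exp_log hΓa, mul_comm (1-α), ← Real.rpow_def_of_pos h1]

/-- Lower bound for the Gamma ratio: `Γ(y+α) ≥ y^α/2 · Γ(y)` for `y ≥ 1`. -/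
lemma gamma_ratio' {α y : ℝ} (hα0 : 0 < α) (hα1 : α ≤ 1) (hy : 1 ≤ y) :
    y ^ α / 2 * Real.Gamma y ≤ Real.Gamma (y + α) := by
  have hy0 : (0:ℝ) < y := by linarith
  have h1 : (0:ℝ) < y + α := by linarith
  have key := gamma_ratio hα0 hα1 hy0
  have hΓy : 0 < Real.Gamma y := Real.Gamma_pos_of_pos hy0
  have hΓ1 : Real.Gamma (y + 1) = y * Real.Gamma y := Real.Gamma_add_one (ne_of_gt hy0)
  -- (y+α)^(1-α) ≤ 2 * y^(1-α)
  have h2y : y + α ≤ 2 * y := by linarith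
  have hb : (y + α) ^ (1 - α) ≤ 2 * y ^ (1 - α) := by
    calc (y + α) ^ (1 - α) ≤ (2 * y) ^ (1 - α) :=
          Real.rpow_le_rpow (le_of_lt h1) h2y (by linarith)
      _ = 2 ^ (1 - α) * y ^ (1 - α) := Real.mul_rpow (by norm_num) (le_of_lt hy0)
      _ ≤ 2 * y ^ (1 - α) := by
          have : (2:ℝ) ^ (1 - α) ≤ 2 ^ (1:ℝ) :=
            Real.rpow_le_rpow_of_exponent_le (by norm_num) (by linarith)
          rw [Real.rpow_one] at this
          have := Real.rpow_nonneg (le_of_lt hy0) (1 - α)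
          nlinarith
  have hΓa : 0 < Real.Gamma (y + α) := Real.Gamma_pos_of_pos h1
  have hyy : y = y ^ (1 - α) * y ^ α := by
    rw [← Real.rpow_add hy0]; norm_num
  have hpow : 0 < y ^ (1 - α) := Real.rpow_pos_of_pos hy0 _
  have hpa : 0 < y ^ α := Real.rpow_pos_of_pos hy0 _
  -- y * Γ y = Γ(y+1) ≤ (y+α)^(1-α) Γ(y+α) ≤ 2 y^(1-α) Γ(y+α)
  have : y * Real.Gamma y ≤ 2 * y ^ (1 - α) * Real.Gamma (y + α) := by
    rw [← hΓ1]
    calc Real.Gamma (y + 1) ≤ (y + α) ^ (1 - α) * Real.Gamma (y + α) := key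
      _ ≤ 2 * y ^ (1 - α) * Real.Gamma (y + α) := by nlinarith
  rw [hyy] at this
  rw [div_mul_eq_mul_div, div_le_iff₀ (by norm_num : (0:ℝ) < 2)]
  nlinarith

/-- Summability of the Mittag-Leffler series. -/
lemma ML_summable {α : ℝ} (hα0 : 0 < α) (hα1 : α ≤ 1) (z : ℝ) :
    Summable (fun k : ℕ => z ^ k / Real.Gamma (α * k + 1)) := by
  apply summable_of_ratio_norm_eventually_le (r := 1/2) (by norm_num)
  have htend : Filter.Tendsto (fun k : ℕ => α * k + 1) Filter.atTop Filter.atTop := by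
    apply Filter.tendsto_atTop_add_const_right
    exact (tendsto_natCast_atTop_atTop).const_mul_atTop hα0
  have hev := htend.eventually_ge_atTop (max 1 ((4 * |z| + 1) ^ (1/α)))
  filter_upwards [hev] with k hk
  set y := α * k + 1 with hydef
  have hy1 : 1 ≤ y := le_trans (le_max_left _ _) hk
  have hy0 : (0:ℝ) < y := by linarith
  have hΓy : 0 < Real.Gamma y := Real.Gamma_pos_of_pos hy0
  have hΓa : 0 < Real.Gamma (y + α) := Real.Gamma_pos_of_pos (by linarith)
  have hyα : 4 * |z| ≤ y ^ α := by
    have h1 : ((4 * |z| + 1) ^ (1/α)) ≤ y := le_trans (le_max_right _ _) hk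
    have h2 : ((4 * |z| + 1) ^ (1/α)) ^ α ≤ y ^ α :=
      Real.rpow_le_rpow (Real.rpow_nonneg (by positivity) _) h1 (le_of_lt hα0)
    rw [← Real.rpow_mul (by positivity), one_div, inv_mul_cancel₀ (ne_of_gt hα0),
      Real.rpow_one] at h2
    linarith
  have hrat : 2 * |z| * Real.Gamma y ≤ Real.Gamma (y + α) := by
    have := gamma_ratio' hα0 hα1 hy1
    nlinarith
  have hnext : α * (k + 1 : ℕ) + 1 = y + α := by push_cast; ring
  rw [hnext]
  rw [norm_div, norm_div, Real.norm_eq_abs, Real.norm_eq_abs, Real.norm_eq_abs,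
    Real.norm_eq_abs, abs_pow, abs_pow, abs_of_pos hΓa, abs_of_pos hΓy]
  have h4 : |z| ^ (k+1) ≤ 1/2 * |z| ^ k * Real.Gamma (y + α) / Real.Gamma y := by
    rw [le_div_iff₀ hΓy]
    have h5 : |z| * Real.Gamma y ≤ Real.Gamma (y + α) / 2 := by linarith
    calc |z| ^ (k+1) * Real.Gamma y = |z| ^ k * (|z| * Real.Gamma y) := by ring
      _ ≤ |z| ^ k * (Real.Gamma (y + α) / 2) :=
          mul_le_mul_of_nonneg_left h5 (by positivity)
      _ = 1/2 * |z| ^ k * Real.Gamma (y + α) := by ring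
  calc |z| ^ (k+1) / Real.Gamma (y + α)
      ≤ (1/2 * |z| ^ k * Real.Gamma (y + α) / Real.Gamma y) / Real.Gamma (y + α) :=
        (div_le_div_iff_of_pos_right hΓa).2 h4
    _ = 1/2 * (|z| ^ k / Real.Gamma y) := by field_simp




lemma Gamma_arg_pos {α : ℝ} (k : ℕ) (hα0 : 0 < α) : (0:ℝ) < α * k + 1 := by positivity

lemma ML_term_nonneg {α : ℝ} (hα0 : 0 < α) {z : ℝ} (hz : 0 ≤ z) (k : ℕ) :
    0 ≤ z ^ k / Real.Gamma (α * k + 1) :=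
  div_nonneg (pow_nonneg hz k) (le_of_lt (Real.Gamma_pos_of_pos (Gamma_arg_pos k hα0)))

lemma ML_nonneg {α : ℝ} (hα0 : 0 < α) {z : ℝ} (hz : 0 ≤ z) : 0 ≤ ML α z :=
  tsum_nonneg (ML_term_nonneg hα0 hz)

lemma ML_one_le {α : ℝ} (hα0 : 0 < α) (hα1 : α ≤ 1) {z : ℝ} (hz : 0 ≤ z) : 1 ≤ ML α z := by
  have h0 : z ^ (0:ℕ) / Real.Gamma (α * (0:ℕ) + 1) = 1 := by
    simp [Real.Gamma_one]
  calc (1:ℝ) = z ^ (0:ℕ) / Real.Gamma (α * (0:ℕ) + 1) := h0.symm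
    _ ≤ ML α z := Summable.le_tsum (ML_summable hα0 hα1 z) 0
        (fun j _ => ML_term_nonneg hα0 hz j)

lemma ML_pos {α : ℝ} (hα0 : 0 < α) (hα1 : α ≤ 1) {z : ℝ} (hz : 0 ≤ z) : 0 < ML α z := lt_of_lt_of_le one_pos (ML_one_le hα0 hα1 hz)

lemma ML_mono {α : ℝ} (hα0 : 0 < α) (hα1 : α ≤ 1) {z w : ℝ} (hz : 0 ≤ z) (hzw : z ≤ w) : ML α z ≤ ML α w := by
  apply Summable.tsum_le_tsum _ (ML_summable hα0 hα1 z) (ML_summable hα0 hα1 w)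
  intro k
  apply div_le_div_of_nonneg_right (pow_le_pow_left₀ hz hzw k)
    (Real.Gamma_pos_of_pos (Gamma_arg_pos k hα0)).le

lemma ML_continuousOn {α : ℝ} (hα0 : 0 < α) (hα1 : α ≤ 1) {Z : ℝ} (hZ : 0 ≤ Z) : ContinuousOn (ML α) (Icc 0 Z) := by
  show ContinuousOn (fun z => ∑' k : ℕ, z ^ k / Real.Gamma (α * k + 1)) (Icc 0 Z)
  refine (tendstoUniformlyOn_tsum (ML_summable hα0 hα1 Z) ?_).continuousOn
    (Filter.Eventually.of_forall fun N =>
      continuousOn_finset_sum _ fun i _ => (continuousOn_pow i).div_const _).frequently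
  intro k z hz
  · rw [Real.norm_eq_abs, abs_div, abs_pow,
      abs_of_pos (Real.Gamma_pos_of_pos (Gamma_arg_pos k hα0)), abs_of_nonneg hz.1]
    exact div_le_div_of_nonneg_right (pow_le_pow_left₀ hz.1 hz.2 k)
      (Real.Gamma_pos_of_pos (Gamma_arg_pos k hα0)).le


lemma real_beta {p q : ℝ} (hp : 0 < p) (hq : 0 < q) :
    ∫ y in (0:ℝ)..1, y ^ (p - 1) * (1 - y) ^ (q - 1) =
      Real.Gamma p * Real.Gamma q / Real.Gamma (p + q) := by
  have h := Complex.Gamma_mul_Gamma_eq_betaIntegral (s := (p:ℂ)) (t := (q:ℂ))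
    (by simpa using hp) (by simpa using hq)
  have hbeta : Complex.betaIntegral p q =
      ((∫ y in (0:ℝ)..1, y ^ (p - 1) * (1 - y) ^ (q - 1) : ℝ) : ℂ) := by
    rw [Complex.betaIntegral, ← intervalIntegral.integral_ofReal]
    apply intervalIntegral.integral_congr
    intro x hx
    dsimp only
    rw [uIcc_of_le (by norm_num : (0:ℝ) ≤ 1)] at hx
    rw [Complex.ofReal_mul, Complex.ofReal_cpow hx.1, Complex.ofReal_cpow (by linarith [hx.2])]
    push_cast
    norm_num
  rw [hbeta, ← Complex.ofReal_add, Complex.Gamma_ofReal, Complex.Gamma_ofReal,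
    Complex.Gamma_ofReal, ← Complex.ofReal_mul, ← Complex.ofReal_mul] at h
  have h2 : Real.Gamma p * Real.Gamma q =
      Real.Gamma (p + q) * ∫ y in (0:ℝ)..1, y ^ (p - 1) * (1 - y) ^ (q - 1) := by
    exact_mod_cast h
  have hΓ : Real.Gamma (p + q) ≠ 0 := ne_of_gt (Real.Gamma_pos_of_pos (by linarith))
  field_simp [h2]
  rw [h2]; ring

/-- The scaled Beta integral on `c..T`. -/
lemma beta_scaled {α c T e : ℝ} (hα0 : 0 < α) (hct : c < T) (he : 0 ≤ e) :
    ∫ x in c..T, (T - x) ^ (α - 1) * (x - c) ^ e =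
      (T - c) ^ (α + e) * (Real.Gamma (e + 1) * Real.Gamma α / Real.Gamma (e + 1 + α)) := by
  set S := T - c with hS
  have hS0 : 0 < S := by simp [hS]; linarith
  have key := intervalIntegral.integral_comp_mul_add
    (a := (0:ℝ)) (b := 1) (f := fun x => (T - x) ^ (α - 1) * (x - c) ^ e)
    (ne_of_gt hS0) c
  rw [mul_zero, zero_add, mul_one] at key
  have hTc : S + c = T := by simp [hS]
  rw [hTc] at key
  have congr1 : ∫ y in (0:ℝ)..1, (T - (S * y + c)) ^ (α - 1) * ((S * y + c) - c) ^ e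
      = ∫ y in (0:ℝ)..1, S ^ (α - 1 + e) * ((1 - y) ^ (α - 1) * y ^ e) := by
    apply intervalIntegral.integral_congr
    intro y hy
    dsimp only
    rw [uIcc_of_le (by norm_num : (0:ℝ) ≤ 1)] at hy
    have h1 : T - (S * y + c) = S * (1 - y) := by simp [hS]; ring
    have h2 : (S * y + c) - c = S * y := by ring
    rw [h1, h2, Real.mul_rpow hS0.le (by linarith [hy.2]), Real.mul_rpow hS0.le hy.1,
      Real.rpow_add hS0]
    ring
  have congr2 : ∫ y in (0:ℝ)..1, S ^ (α - 1 + e) * ((1 - y) ^ (α - 1) * y ^ e)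
      = S ^ (α - 1 + e) * ∫ y in (0:ℝ)..1, y ^ e * (1 - y) ^ (α - 1) := by
    rw [← intervalIntegral.integral_const_mul]
    congr 1; funext y; ring
  have hbeta : ∫ y in (0:ℝ)..1, y ^ e * (1 - y) ^ (α - 1)
      = Real.Gamma (e + 1) * Real.Gamma α / Real.Gamma (e + 1 + α) := by
    have := real_beta (p := e + 1) (q := α) (by linarith) hα0
    simpa using this
  rw [congr1, congr2, hbeta] at key
  have h6 : S⁻¹ * (∫ x in c..T, (T - x) ^ (α - 1) * (x - c) ^ e)
      = S ^ (α - 1 + e) * (Real.Gamma (e + 1) * Real.Gamma α / Real.Gamma (e + 1 + α)) := by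
    rw [← smul_eq_mul]; exact key.symm
  have : (∫ x in c..T, (T - x) ^ (α - 1) * (x - c) ^ e)
      = S * (S ^ (α - 1 + e) * (Real.Gamma (e + 1) * Real.Gamma α / Real.Gamma (e + 1 + α))) := by
    calc (∫ x in c..T, (T - x) ^ (α - 1) * (x - c) ^ e)
        = S * (S⁻¹ * ∫ x in c..T, (T - x) ^ (α - 1) * (x - c) ^ e) := by field_simp
      _ = S * (S ^ (α - 1 + e) * (Real.Gamma (e + 1) * Real.Gamma α / Real.Gamma (e + 1 + α))) := by
          rw [h6]
  have hSS : S ^ (α + e) = S * S ^ (α - 1 + e) := by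
    rw [show α + e = 1 + (α - 1 + e) by ring,
      Real.rpow_one_add' hS0.le (by rw [show 1 + (α - 1 + e) = α + e by ring]; positivity)]
  rw [this, hSS]; ring


lemma cont_rpow_const {e : ℝ} (he : 0 ≤ e) : Continuous (fun x : ℝ => x ^ e) := by
  rw [continuous_iff_continuousAt]
  intro x
  exact Real.continuousAt_rpow_const x e (Or.inr he)

lemma integrable_weight {α c T : ℝ} (hα0 : 0 < α) (hct : c < T) :
    IntegrableOn (fun x => (T - x) ^ (α - 1)) (Ioc c T) := by
  have h1 : IntervalIntegrable (fun x : ℝ => x ^ (α - 1)) volume 0 (T - c) :=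
    intervalIntegral.intervalIntegrable_rpow' (by linarith)
  have h2 := h1.comp_sub_left T
  rw [sub_zero] at h2
  have h3 : IntervalIntegrable (fun x : ℝ => (T - x) ^ (α - 1)) volume c T := by
    have := h2.symm
    simpa using this
  rw [intervalIntegrable_iff_integrableOn_Ioc_of_le (le_of_lt hct)] at h3
  exact h3

lemma integrable_weight_mul {α c T e : ℝ} (hα0 : 0 < α) (hct : c < T) (he : 0 ≤ e) :
    IntegrableOn (fun x => (T - x) ^ (α - 1) * (x - c) ^ e) (Ioc c T) := by
  have h1 : IntervalIntegrable (fun x : ℝ => (T - x) ^ (α - 1)) volume c T := by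
    rw [intervalIntegrable_iff_integrableOn_Ioc_of_le (le_of_lt hct)]
    exact integrable_weight hα0 hct
  have h2 : ContinuousOn (fun x : ℝ => (x - c) ^ e) (uIcc c T) :=
    ((cont_rpow_const he).comp (continuous_id.sub continuous_const)).continuousOn
  have h3 := h1.mul_continuousOn h2
  rwa [intervalIntegrable_iff_integrableOn_Ioc_of_le (le_of_lt hct)] at h3






lemma key_integral {α ξ c T : ℝ} (hα0 : 0 < α) (hα1 : α ≤ 1) (hξ : 0 < ξ) (hct : c < T) :
    ∫ x in Ioc c T, (T - x) ^ (α - 1) * ML α (ξ * (x - c) ^ α)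
      ≤ Real.Gamma α / ξ * ML α (ξ * (T - c) ^ α) := by
  set S := T - c with hS
  have hS0 : 0 < S := by simp [hS]; linarith
  set g : ℕ → ℝ → ℝ := fun k x => (T - x) ^ (α - 1) * (ξ ^ k * (x - c) ^ (α * k) / Real.Gamma (α * k + 1)) with hg
  set A : ℕ → ℝ := fun k => Real.Gamma α * ξ ^ k * S ^ (α * (k + 1)) / Real.Gamma (α * (k + 1) + 1) with hA
  have hΓpos : ∀ x : ℝ, 0 < x → 0 < Real.Gamma x := fun x hx => Real.Gamma_pos_of_pos hx
  have hargpos : ∀ k : ℕ, (0:ℝ) < α * k + 1 := fun k => by positivity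
  -- pointwise expansion
  have hfun : ∀ x ∈ Ioc c T, (T - x) ^ (α - 1) * ML α (ξ * (x - c) ^ α) = ∑' k, g k x := by
    intro x hx
    have hxc : (0:ℝ) ≤ x - c := by linarith [hx.1]
    have hexp : ∀ k : ℕ, (ξ * (x - c) ^ α) ^ k = ξ ^ k * (x - c) ^ (α * k) := by
      intro k
      rw [mul_pow, ← Real.rpow_natCast ((x - c) ^ α) k, ← Real.rpow_mul hxc]
    rw [ML]
    rw [tsum_mul_left.symm]
    congr 1
    funext k
    rw [hg]
    dsimp only
    rw [hexp k]
  -- measurability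
  have hmeas : ∀ k : ℕ, AEStronglyMeasurable (g k) (volume.restrict (Ioc c T)) := by
    intro k
    apply Measurable.aestronglyMeasurable
    exact ((meas_rpow_const (α - 1)).comp (measurable_const.sub measurable_id)).mul
      ((((meas_rpow_const (α * k)).comp (measurable_id.sub measurable_const)).const_mul
        (ξ ^ k)).div_const _)
  -- integrability and value of each term
  have hInt : ∀ k : ℕ, IntegrableOn (g k) (Ioc c T) := by
    intro k
    have h1 : IntegrableOn
        (fun x => ξ ^ k / Real.Gamma (α * k + 1) * ((T - x) ^ (α - 1) * (x - c) ^ (α * k)))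
        (Ioc c T) :=
      (integrable_weight_mul (e := α * k) hα0 hct (by positivity)).const_mul
        (ξ ^ k / Real.Gamma (α * k + 1))
    apply h1.congr_fun _ measurableSet_Ioc
    intro x hx
    rw [hg]; dsimp only; ring
  have hval : ∀ k : ℕ, ∫ x in Ioc c T, g k x = A k := by
    intro k
    have e1 : ∫ x in Ioc c T, g k x
        = (ξ ^ k / Real.Gamma (α * k + 1)) * ∫ x in Ioc c T, (T - x) ^ (α - 1) * (x - c) ^ (α * k) := by
      rw [← MeasureTheory.integral_const_mul]
      apply setIntegral_congr_fun measurableSet_Ioc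
      intro x hx
      rw [hg]; dsimp only; ring
    rw [e1, ← intervalIntegral.integral_of_le (le_of_lt hct),
      beta_scaled hα0 hct (by positivity : (0:ℝ) ≤ α * k)]
    rw [hA]; dsimp only
    rw [show α * k + 1 + α = α * ((k:ℝ) + 1) + 1 by push_cast; ring,
      show α + α * k = α * ((k:ℝ) + 1) by push_cast; ring]
    have h2 := ne_of_gt (hΓpos _ (hargpos k))
    generalize S ^ (α * ((k:ℝ) + 1)) = P
    generalize hQ : Real.Gamma (α * ((k:ℝ) + 1) + 1) = Q
    generalize hR : Real.Gamma (α * (k:ℝ) + 1) = R at h2 ⊢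
    field_simp [h2]
  -- nonnegativity of terms
  have hg_nonneg : ∀ k : ℕ, ∀ x ∈ Ioc c T, 0 ≤ g k x := by
    intro k x hx
    rw [hg]; dsimp only
    have h1 : (0:ℝ) ≤ T - x := by linarith [hx.2]
    have h2 : (0:ℝ) ≤ x - c := by linarith [hx.1]
    have := (hΓpos _ (hargpos k)).le
    positivity
  -- A is summable
  have hb := ML_summable hα0 hα1 (ξ * S ^ α)
  have hA_eq : ∀ k : ℕ, A k = (Real.Gamma α / ξ) *
      ((ξ * S ^ α) ^ (k + 1) / Real.Gamma (α * (k + 1) + 1)) := by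
    intro k
    have hexp : (ξ * S ^ α) ^ (k + 1) = ξ ^ (k + 1) * S ^ (α * (k + 1)) := by
      rw [mul_pow, ← Real.rpow_natCast (S ^ α) (k+1), ← Real.rpow_mul hS0.le]
      norm_num
    rw [hA]; dsimp only
    rw [hexp]
    push_cast
    rw [pow_succ]
    generalize S ^ (α * ((k:ℝ) + 1)) = P
    generalize Real.Gamma (α * ((k:ℝ) + 1) + 1) = Q
    field_simp [ne_of_gt hξ]
  have hA_nonneg : ∀ k : ℕ, 0 ≤ A k := by
    intro k
    rw [hA]; dsimp only
    have := (hΓpos _ (hargpos (k+1))).le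
    have h3 : (0:ℝ) < Real.Gamma (α * (↑k + 1) + 1) := hΓpos _ (by positivity)
    positivity
  have hA_summable : Summable A := by
    have h1 : Summable (fun k : ℕ => (ξ * S ^ α) ^ (k + 1) / Real.Gamma (α * (k + 1) + 1)) := by
      have := (summable_nat_add_iff 1).mpr hb
      apply this.congr
      intro k
      push_cast
      norm_num
    exact (h1.mul_left _).congr (fun k => (hA_eq k).symm)
  -- interchange sum and integral
  have hlint : (∑' k, ∫⁻ x in Ioc c T, (‖g k x‖₊ : ℝ≥0∞) ∂volume) ≠ ⊤ := by
    have heq : ∀ k : ℕ, ∫⁻ x in Ioc c T, (‖g k x‖₊ : ℝ≥0∞) ∂volume = ENNReal.ofReal (A k) := by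
      intro k
      have hae : ∀ᵐ x ∂(volume.restrict (Ioc c T)), 0 ≤ g k x :=
        (ae_restrict_iff' measurableSet_Ioc).mpr (Filter.Eventually.of_forall (hg_nonneg k))
      rw [← hval k, ofReal_integral_eq_lintegral_ofReal (hInt k) hae]
      · apply lintegral_congr_ae
        filter_upwards [hae] with x hx
        rw [← enorm_eq_nnnorm, Real.enorm_eq_ofReal hx]
    rw [tsum_congr heq, ← ENNReal.ofReal_tsum_of_nonneg hA_nonneg hA_summable]
    exact ENNReal.ofReal_ne_top
  have hmain : ∫ x in Ioc c T, (T - x) ^ (α - 1) * ML α (ξ * (x - c) ^ α) = ∑' k, A k := by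
    rw [setIntegral_congr_fun measurableSet_Ioc hfun]
    rw [MeasureTheory.integral_tsum hmeas hlint]
    exact tsum_congr hval
  -- final bound
  have htsum : ∑' k, A k = (Real.Gamma α / ξ) * (ML α (ξ * S ^ α) - 1) := by
    have h0 : ML α (ξ * S ^ α) = 1 + ∑' k : ℕ, ((ξ * S ^ α) ^ (k + 1) / Real.Gamma (α * (k + 1) + 1)) := by
      rw [ML, Summable.tsum_eq_zero_add hb]
      congr 1
      · simp [Real.Gamma_one]
      · apply tsum_congr; intro k; push_cast; norm_num
    rw [tsum_congr hA_eq, tsum_mul_left, h0]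
    ring
  rw [hmain, htsum]
  have hML1 : 1 ≤ ML α (ξ * S ^ α) := ML_one_le hα0 hα1 (by positivity)
  have hc : 0 ≤ Real.Gamma α / ξ := le_of_lt (div_pos (hΓpos _ hα0) hξ)
  have : ML α (ξ * S ^ α) - 1 ≤ ML α (ξ * S ^ α) := by linarith
  calc Real.Gamma α / ξ * (ML α (ξ * S ^ α) - 1) ≤ Real.Gamma α / ξ * ML α (ξ * S ^ α) :=
        mul_le_mul_of_nonneg_left this hc
    _ = Real.Gamma α / ξ * ML α (ξ * (T - c) ^ α) := by rw [← hS]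


end Aux

section Main
open Real
open scoped ENNReal NNReal





theorem volterra_operator_contraction
    (n : ℕ) (a b α L M δ ξ : ℝ) (ψ : ℝ → ℝ)
    (f : ℝ → EuclideanSpace ℝ (Fin n) → EuclideanSpace ℝ (Fin n) → EuclideanSpace ℝ (Fin n))
    (k : ℝ → ℝ → EuclideanSpace ℝ (Fin n) → EuclideanSpace ℝ (Fin n))
    (hα0 : 0 < α) (hα1 : α ≤ 1) (hab : a ≤ b)
    (hmono : StrictMonoOn ψ (Icc a b)) (hC1 : ContDiffOn ℝ 1 ψ (Icc a b))
    (hL : 0 < L) (hM : 0 ≤ M) (hδ : 1 < δ) (hξ : ξ = L * δ)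
    (hf : Continuous fun p : ℝ × EuclideanSpace ℝ (Fin n) × EuclideanSpace ℝ (Fin n) =>
      f p.1 p.2.1 p.2.2)
    (hk : Continuous fun p : ℝ × ℝ × EuclideanSpace ℝ (Fin n) => k p.1 p.2.1 p.2.2)
    (hfLip : ∀ t u v u' v', ‖f t u v - f t u' v'‖ ≤ M * (‖u - u'‖ + ‖v - v'‖))
    (hkLip : ∀ t s u u', ‖k t s u - k t s u'‖ ≤ L * ‖u - u'‖)
    (u v : ℝ → EuclideanSpace ℝ (Fin n))
    (hu : ContinuousOn u (Icc a b)) (hv : ContinuousOn v (Icc a b)) :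
    dXi a b ξ α ψ (fun t => f t (u t) (volterraK α ψ a k u t))
        (fun t => f t (v t) (volterraK α ψ a k v t))
      ≤ M * (1 + 1 / δ) * dXi a b ξ α ψ u v := by
  have hδ0 : (0:ℝ) < δ := by linarith
  have hξ0 : (0:ℝ) < ξ := by rw [hξ]; positivity
  have hΓα : 0 < Real.Gamma α := Real.Gamma_pos_of_pos hα0
  have hmemab : a ∈ Icc a b := left_mem_Icc.2 hab
  have hne : Nonempty (Icc a b) := ⟨⟨a, hmemab⟩⟩
  have hψmono : ∀ s ∈ Icc a b, ψ a ≤ ψ s := fun s hs =>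
    hmono.monotoneOn hmemab hs hs.1
  have hz_nonneg : ∀ s ∈ Icc a b, 0 ≤ ξ * (ψ s - ψ a) ^ α := by
    intro s hs
    have := hψmono s hs
    have h2 : (0:ℝ) ≤ ψ s - ψ a := by linarith
    positivity
  have hML1 : ∀ s ∈ Icc a b, 1 ≤ ML α (ξ * (ψ s - ψ a) ^ α) := fun s hs =>
    ML_one_le hα0 hα1 (hz_nonneg s hs)
  have hMLpos : ∀ s ∈ Icc a b, 0 < ML α (ξ * (ψ s - ψ a) ^ α) := fun s hs =>
    lt_of_lt_of_le one_pos (hML1 s hs)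
  set d := dXi a b ξ α ψ u v with hd
  have hd0 : 0 ≤ d := by
    apply Real.iSup_nonneg
    intro s
    exact div_nonneg (norm_nonneg _) (hMLpos s.1 s.2).le
  obtain ⟨C, hC⟩ := isCompact_Icc.exists_bound_of_continuousOn (hu.sub hv)
  have hbdd : BddAbove (range fun s : Icc a b =>
      ‖u s.1 - v s.1‖ / ML α (ξ * (ψ s.1 - ψ a) ^ α)) := by
    refine ⟨max C 0, ?_⟩
    rintro _ ⟨s, rfl⟩
    calc ‖u s.1 - v s.1‖ / ML α (ξ * (ψ s.1 - ψ a) ^ α) ≤ ‖u s.1 - v s.1‖ :=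
          div_le_self (norm_nonneg _) (hML1 s.1 s.2)
      _ ≤ C := hC s.1 s.2
      _ ≤ max C 0 := le_max_left _ _
  have Hd : ∀ s ∈ Icc a b, ‖u s - v s‖ ≤ d * ML α (ξ * (ψ s - ψ a) ^ α) := by
    intro s hs
    have h1 : ‖u s - v s‖ / ML α (ξ * (ψ s - ψ a) ^ α) ≤ d :=
      le_ciSup hbdd (⟨s, hs⟩ : Icc a b)
    rwa [div_le_iff₀ (hMLpos s hs)] at h1
  -- central estimate on the Volterra part
  have key : ∀ t ∈ Icc a b, ‖volterraK α ψ a k u t - volterraK α ψ a k v t‖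
      ≤ d / δ * ML α (ξ * (ψ t - ψ a) ^ α) := by
    intro t ht
    rcases eq_or_lt_of_le ht.1 with heq | hat
    · -- t = a
      have : volterraK α ψ a k u t = volterraK α ψ a k v t := by
        rw [volterraK, volterraK, ← heq, intervalIntegral.integral_same,
          intervalIntegral.integral_same]
      rw [this, sub_self, norm_zero]
      have := (hMLpos t ht).le
      positivity
    · -- a < t
      set c := ψ a with hc
      set T := ψ t with hT
      have hcT : c < T := hmono hmemab ht hat
      have hIoo_sub : Ioo a t ⊆ Icc a b := fun s hs =>
        ⟨le_of_lt hs.1, le_trans (le_of_lt hs.2) ht.2⟩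
      have hIoo_sub' : Ioo a t ⊆ Ioo a b := fun s hs => ⟨hs.1, lt_of_lt_of_le hs.2 ht.2⟩
      have hdiff : ∀ s ∈ Ioo a t, HasDerivAt ψ (deriv ψ s) s := by
        intro s hs
        have h1 : DifferentiableWithinAt ℝ ψ (Icc a b) s :=
          (hC1.differentiableOn one_ne_zero) s (hIoo_sub hs)
        have h2 : Icc a b ∈ nhds s := Icc_mem_nhds (hIoo_sub' hs).1 (hIoo_sub' hs).2
        exact (h1.differentiableAt h2).hasDerivAt
      have hψpos : ∀ s ∈ Ioo a t, 0 ≤ deriv ψ s := by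
        intro s hs
        have hsb : s < b := (hIoo_sub' hs).2
        have h3 : Filter.Tendsto (slope ψ s) (nhdsWithin s (Ioi s)) (nhds (deriv ψ s)) :=
          (hasDerivAt_iff_tendsto_slope.mp (hdiff s hs)).mono_left
            (nhdsWithin_mono s (fun y hy => ne_of_gt hy))
        apply ge_of_tendsto h3
        filter_upwards [Ioo_mem_nhdsGT_of_mem ⟨le_refl s, hsb⟩] with y hy
        have hyIcc : y ∈ Icc a b := ⟨le_trans (hIoo_sub hs).1 (le_of_lt hy.1), le_of_lt hy.2⟩
        have hlt : ψ s < ψ y := hmono (hIoo_sub hs) hyIcc hy.1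
        rw [slope_def_field]
        apply div_nonneg (by linarith) (by linarith [hy.1])
      have hHD : ∀ s ∈ Ioo a t, HasDerivWithinAt ψ (deriv ψ s) (Ioo a t) s :=
        fun s hs => (hdiff s hs).hasDerivWithinAt
      have hinj : InjOn ψ (Ioo a t) := hmono.injOn.mono hIoo_sub
      have himg : ψ '' Ioo a t = Ioo c T := by
        apply Subset.antisymm
        · rintro _ ⟨s, hs, rfl⟩
          exact ⟨hmono hmemab (hIoo_sub hs) hs.1, hmono (hIoo_sub hs) ht hs.2⟩
        · exact intermediate_value_Ioo ht.1
            (hC1.continuousOn.mono (Icc_subset_Icc le_rfl ht.2))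
      have htrans : ∀ G : ℝ → ℝ, (∫ x in Ioo c T, G x)
          = ∫ s in Ioo a t, |deriv ψ s| * G (ψ s) := by
        intro G
        rw [← himg, integral_image_eq_integral_abs_deriv_smul measurableSet_Ioo hHD hinj G]
        simp [smul_eq_mul]
      have htransInt : ∀ G : ℝ → ℝ, IntegrableOn G (Ioo c T) →
          IntegrableOn (fun s => |deriv ψ s| * G (ψ s)) (Ioo a t) := by
        intro G hG
        have h1 := (integrableOn_image_iff_integrableOn_abs_deriv_smul
          measurableSet_Ioo hHD hinj G).mp (by rwa [himg])
        simpa [smul_eq_mul] using h1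
      have hg0 : IntegrableOn (fun x => (T - x) ^ (α - 1)) (Ioo c T) :=
        (integrable_weight hα0 hcT).mono_set Ioo_subset_Ioc_self
      have hZ0 : 0 ≤ ξ * (T - c) ^ α := by
        have : (0:ℝ) ≤ T - c := by linarith
        positivity
      have hMLcont : ContinuousOn (fun x => ML α (ξ * (x - c) ^ α)) (Icc c T) := by
        apply (ML_continuousOn hα0 hα1 hZ0).comp
        · exact (continuous_const.mul ((cont_rpow_const hα0.le).comp
            (continuous_id.sub continuous_const))).continuousOn
        · intro x hx
          have h1 : (0:ℝ) ≤ x - c := by linarith [hx.1]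
          constructor
          · positivity
          · apply mul_le_mul_of_nonneg_left _ hξ0.le
            exact Real.rpow_le_rpow h1 (by linarith [hx.2]) hα0.le
      have hMLb : ∀ x ∈ Ioo c T, ML α (ξ * (x - c) ^ α) ≤ ML α (ξ * (T - c) ^ α) := by
        intro x hx
        apply ML_mono hα0 hα1
        · have h1 : (0:ℝ) ≤ x - c := by linarith [hx.1]
          positivity
        · apply mul_le_mul_of_nonneg_left _ hξ0.le
          exact Real.rpow_le_rpow (by linarith [hx.1]) (by linarith [hx.2]) hα0.le
      have hML_nonneg : ∀ x ∈ Ioo c T, 0 ≤ ML α (ξ * (x - c) ^ α) := by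
        intro x hx
        have h1 : (0:ℝ) ≤ x - c := by linarith [hx.1]
        have := ML_one_le hα0 hα1 (z := ξ * (x - c) ^ α) (by positivity)
        linarith
      have hgML : IntegrableOn (fun x => (T - x) ^ (α - 1) * ML α (ξ * (x - c) ^ α))
          (Ioo c T) := by
        apply Integrable.mono' (hg0.mul_const (ML α (ξ * (T - c) ^ α)))
        · exact (((meas_rpow_const (α - 1)).comp
            (measurable_const.sub measurable_id)).aestronglyMeasurable).mul
            ((hMLcont.mono Ioo_subset_Icc_self).aestronglyMeasurable measurableSet_Ioo)
        · rw [ae_restrict_iff' measurableSet_Ioo]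
          apply Filter.Eventually.of_forall
          intro x hx
          have h1 : (0:ℝ) ≤ T - x := by linarith [hx.2]
          have h2 : (0:ℝ) ≤ (T - x) ^ (α - 1) := Real.rpow_nonneg h1 _
          rw [Real.norm_eq_abs, abs_of_nonneg (mul_nonneg h2 (hML_nonneg x hx))]
          exact mul_le_mul_of_nonneg_left (hMLb x hx) h2
      have hwML := htransInt _ hgML
      have hw := htransInt _ hg0
      -- measurability on the s side
      have hψm : AEMeasurable ψ (volume.restrict (Ioo a t)) :=
        ((hC1.continuousOn.mono hIoo_sub).aemeasurable measurableSet_Ioo)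
      have hwm : AEStronglyMeasurable (fun s => deriv ψ s * (T - ψ s) ^ (α - 1))
          (volume.restrict (Ioo a t)) := by
        apply AEMeasurable.aestronglyMeasurable
        exact ((measurable_deriv ψ).aemeasurable).mul
          ((meas_rpow_const (α - 1)).comp_aemeasurable (aemeasurable_const.sub hψm))
      have hkm : ∀ x : ℝ → EuclideanSpace ℝ (Fin n), ContinuousOn x (Icc a b) →
          AEStronglyMeasurable (fun s => k t s (x s)) (volume.restrict (Ioo a t)) := by
        intro x hx
        have h1 : ContinuousOn (fun s => k t s (x s)) (Icc a b) :=
          hk.comp_continuousOn (f := fun s => (t, s, x s)) (continuousOn_const.prodMk (continuousOn_id.prodMk hx))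
        exact (h1.mono hIoo_sub).aestronglyMeasurable measurableSet_Ioo
      -- bounds for the kernels
      obtain ⟨Cu, hCu⟩ := isCompact_Icc.exists_bound_of_continuousOn
        (hk.comp_continuousOn (f := fun s => (t, s, u s)) (continuousOn_const.prodMk (continuousOn_id.prodMk hu))
          : ContinuousOn (fun s => k t s (u s)) (Icc a b))
      obtain ⟨Cv, hCv⟩ := isCompact_Icc.exists_bound_of_continuousOn
        (hk.comp_continuousOn (f := fun s => (t, s, v s)) (continuousOn_const.prodMk (continuousOn_id.prodMk hv))
          : ContinuousOn (fun s => k t s (v s)) (Icc a b))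
      have hTψ : ∀ s ∈ Ioo a t, 0 ≤ (T - ψ s) ^ (α - 1) := by
        intro s hs
        exact Real.rpow_nonneg (by linarith [hmono (hIoo_sub hs) ht hs.2]) _
      have hIgen : ∀ (x : ℝ → EuclideanSpace ℝ (Fin n)), ContinuousOn x (Icc a b) →
          (∀ s ∈ Icc a b, ‖k t s (x s)‖ ≤ max Cu Cv) →
          IntegrableOn (fun s => (deriv ψ s * (T - ψ s) ^ (α - 1)) • k t s (x s)) (Ioo a t) := by
        intro x hx hCx
        apply Integrable.mono' ((hw.mul_const (max Cu Cv)))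
        · exact hwm.smul (hkm x hx)
        · rw [ae_restrict_iff' measurableSet_Ioo]
          apply Filter.Eventually.of_forall
          intro s hs
          rw [norm_smul, Real.norm_eq_abs, abs_mul,
            abs_of_nonneg (hψpos s hs), abs_of_nonneg (hTψ s hs)]
          exact mul_le_mul_of_nonneg_left (hCx s (hIoo_sub hs))
            (mul_nonneg (hψpos s hs) (hTψ s hs))
      have hIu : IntegrableOn
          (fun s => (deriv ψ s * (T - ψ s) ^ (α - 1)) • k t s (u s)) (Ioo a t) :=
        hIgen u hu (fun s hs => le_trans (hCu s hs) (le_max_left _ _))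
      have hIv : IntegrableOn
          (fun s => (deriv ψ s * (T - ψ s) ^ (α - 1)) • k t s (v s)) (Ioo a t) :=
        hIgen v hv (fun s hs => le_trans (hCv s hs) (le_max_right _ _))
      -- rewrite the difference
      have hsplit : volterraK α ψ a k u t - volterraK α ψ a k v t
          = (Real.Gamma α)⁻¹ • ∫ s in Ioo a t,
              (deriv ψ s * (T - ψ s) ^ (α - 1)) • (k t s (u s) - k t s (v s)) := by
        rw [volterraK, volterraK, ← smul_sub]
        congr 1
        rw [intervalIntegral.integral_of_le (le_of_lt hat),
          intervalIntegral.integral_of_le (le_of_lt hat),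
          integral_Ioc_eq_integral_Ioo, integral_Ioc_eq_integral_Ioo,
          ← integral_sub hIu hIv]
        apply setIntegral_congr_fun measurableSet_Ioo
        intro s hs
        dsimp only
        rw [smul_sub]
      -- the main integral bound
      have hnorm : ‖∫ s in Ioo a t,
            (deriv ψ s * (T - ψ s) ^ (α - 1)) • (k t s (u s) - k t s (v s))‖
          ≤ ∫ s in Ioo a t,
              |deriv ψ s| * ((T - ψ s) ^ (α - 1) * ML α (ξ * (ψ s - c) ^ α)) * (L * d) := by
        apply norm_integral_le_of_norm_le (hwML.mul_const (L * d))
        rw [ae_restrict_iff' measurableSet_Ioo]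
        apply Filter.Eventually.of_forall
        intro s hs
        rw [norm_smul, Real.norm_eq_abs, abs_mul, abs_of_nonneg (hψpos s hs),
          abs_of_nonneg (hTψ s hs)]
        have h1 : ‖k t s (u s) - k t s (v s)‖ ≤ L * (d * ML α (ξ * (ψ s - c) ^ α)) := by
          calc ‖k t s (u s) - k t s (v s)‖ ≤ L * ‖u s - v s‖ := hkLip t s (u s) (v s)
            _ ≤ L * (d * ML α (ξ * (ψ s - c) ^ α)) :=
                mul_le_mul_of_nonneg_left (Hd s (hIoo_sub hs)) hL.le
        calc deriv ψ s * (T - ψ s) ^ (α - 1) * ‖k t s (u s) - k t s (v s)‖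
            ≤ deriv ψ s * (T - ψ s) ^ (α - 1) * (L * (d * ML α (ξ * (ψ s - c) ^ α))) :=
              mul_le_mul_of_nonneg_left h1 (mul_nonneg (hψpos s hs) (hTψ s hs))
          _ = deriv ψ s * ((T - ψ s) ^ (α - 1) * ML α (ξ * (ψ s - c) ^ α)) * (L * d) := by
              ring
      have hval : (∫ s in Ioo a t,
            |deriv ψ s| * ((T - ψ s) ^ (α - 1) * ML α (ξ * (ψ s - c) ^ α)) * (L * d))
          ≤ Real.Gamma α / ξ * ML α (ξ * (T - c) ^ α) * (L * d) := by
        rw [integral_mul_const]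
        apply mul_le_mul_of_nonneg_right _ (by positivity)
        have h2 : (∫ s in Ioo a t,
              |deriv ψ s| * ((T - ψ s) ^ (α - 1) * ML α (ξ * (ψ s - c) ^ α)))
            = ∫ x in Ioo c T, (T - x) ^ (α - 1) * ML α (ξ * (x - c) ^ α) := by
          have h3 := htrans (fun x => (T - x) ^ (α - 1) * ML α (ξ * (x - c) ^ α))
          beta_reduce at h3
          exact h3.symm
        rw [h2, ← integral_Ioc_eq_integral_Ioo]
        exact key_integral hα0 hα1 hξ0 hcT
      -- put everything together
      rw [hsplit, norm_smul, Real.norm_eq_abs, abs_of_pos (inv_pos.2 hΓα)]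
      have hLξ : (Real.Gamma α)⁻¹ * (Real.Gamma α / ξ * ML α (ξ * (T - c) ^ α) * (L * d))
          = d / δ * ML α (ξ * (T - c) ^ α) := by
        rw [hξ]
        field_simp
      calc (Real.Gamma α)⁻¹ * ‖∫ s in Ioo a t,
            (deriv ψ s * (T - ψ s) ^ (α - 1)) • (k t s (u s) - k t s (v s))‖
          ≤ (Real.Gamma α)⁻¹ * (Real.Gamma α / ξ * ML α (ξ * (T - c) ^ α) * (L * d)) := by
            apply mul_le_mul_of_nonneg_left (le_trans hnorm hval) (inv_pos.2 hΓα).le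
        _ = d / δ * ML α (ξ * (T - c) ^ α) := hLξ
  -- final supremum estimate
  rw [dXi]
  apply ciSup_le
  rintro ⟨t, ht⟩
  dsimp only
  rw [div_le_iff₀ (hMLpos t ht)]
  calc ‖f t (u t) (volterraK α ψ a k u t) - f t (v t) (volterraK α ψ a k v t)‖
      ≤ M * (‖u t - v t‖ + ‖volterraK α ψ a k u t - volterraK α ψ a k v t‖) :=
        hfLip t (u t) (volterraK α ψ a k u t) (v t) (volterraK α ψ a k v t)
    _ ≤ M * (d * ML α (ξ * (ψ t - ψ a) ^ α) + d / δ * ML α (ξ * (ψ t - ψ a) ^ α)) := by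
        apply mul_le_mul_of_nonneg_left (add_le_add (Hd t ht) (key t ht)) hM
    _ = M * (1 + 1 / δ) * d * ML α (ξ * (ψ t - ψ a) ^ α) := by
        field_simp
    _ = M * (1 + 1 / δ) * dXi a b ξ α ψ u v * ML α (ξ * (ψ t - ψ a) ^ α) := by rw [← hd]

end Main
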